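/- Let $Y$ be a coalgebra and $A$ a bialgebra over a field, and let $h\in A$ satisfy $\varepsilon_A(h)=1$ and $(h\otimes1)\Delta_A(h)=h\otimes h$. Define $\overline{\Delta}\colon Y\otimes A\to (Y\otimes A)\otimes(Y\otimes A)$ by $\overline{\Delta}(y\otimes a)=(y_{(1)}\otimes h a_{(1)})\otimes(y_{(2)}\otimes a_{(2)})$. Then $\overline{\Delta}$ is coassociative: $(\overline{\Delta}\otimes\mathrm{id})\overline{\Delta}=(\mathrm{id}\otimes\overline{\Delta})\overline{\Delta}$. -/

import Mathlib

open TensorProduct LinearMap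

noncomputable section

variable (k : Type*) {Y A : Type*} [CommRing k]
  [AddCommGroup Y] [Module k Y] [Coalgebra k Y] [Ring A] [Bialgebra k A]

/-- The partial smash coproduct comultiplication
`Δ̄(y ⊗ a) = (y₍₁₎ ⊗ h a₍₁₎) ⊗ (y₍₂₎ ⊗ a₍₂₎)` on `Y ⊗ A`. -/
def smashComul (h : A) : Y ⊗[k] A →ₗ[k] (Y ⊗[k] A) ⊗[k] (Y ⊗[k] A) :=
  rTensor (Y ⊗[k] A) (lTensor Y (LinearMap.mulLeft k h)) ∘ₗ
    (TensorProduct.tensorTensorTensorComm k Y Y A A).toLinearMap ∘ₗ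
    TensorProduct.map (Coalgebra.comul (R := k) (A := Y))
      (Coalgebra.comul (R := k) (A := A))

set_option linter.unusedSectionVars false

def mulRepr {a b : A} {ι₁ ι₂ : Type*} (r1 : Coalgebra.Repr k a ι₁) (r2 : Coalgebra.Repr k b ι₂) :
    Coalgebra.Repr k (a * b) (ι₁ × ι₂) where
  index := r1.index ×ˢ r2.index
  left := fun p => r1.left p.1 * r2.left p.2
  right := fun p => r1.right p.1 * r2.right p.2
  eq := by
    show _ = Coalgebra.comul (a * b)
    rw [Bialgebra.comul_mul, ← r1.eq, ← r2.eq, Finset.sum_mul_sum]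
    rw [Finset.sum_product]
    simp [Algebra.TensorProduct.tmul_mul_tmul]

lemma smash_apply (h : A) (y : Y) (a : A) {ι₁ ι₂ : Type*} (ry : Coalgebra.Repr k y ι₁)
    (ra : Coalgebra.Repr k a ι₂) :
    smashComul k h (y ⊗ₜ[k] a) = ∑ i ∈ ry.index, ∑ j ∈ ra.index,
      (ry.left i ⊗ₜ[k] (h * ra.left j)) ⊗ₜ[k] (ry.right i ⊗ₜ[k] ra.right j) := by
  simp only [smashComul, comp_apply, TensorProduct.map_tmul]
  rw [show Coalgebra.comul (R := k) y = _ from (ry.eq).symm,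
      show Coalgebra.comul (R := k) a = _ from (ra.eq).symm]
  simp [TensorProduct.sum_tmul, TensorProduct.tmul_sum, map_sum,
    TensorProduct.tensorTensorTensorComm_tmul]
  rw [Finset.sum_comm]

def interC : (Y ⊗[k] (Y ⊗[k] Y)) ⊗[k] (A ⊗[k] (A ⊗[k] A)) →ₗ[k]
    ((Y ⊗[k] A) ⊗[k] (Y ⊗[k] A)) ⊗[k] (Y ⊗[k] A) :=
  (TensorProduct.assoc k (Y ⊗[k] A) (Y ⊗[k] A) (Y ⊗[k] A)).symm.toLinearMap ∘ₗ
    lTensor (Y ⊗[k] A) (TensorProduct.tensorTensorTensorComm k Y Y A A).toLinearMap ∘ₗ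
    (TensorProduct.tensorTensorTensorComm k Y (Y ⊗[k] Y) A (A ⊗[k] A)).toLinearMap

@[simp] lemma interC_tmul (y1 y2 y3 : Y) (a1 a2 a3 : A) :
    interC k ((y1 ⊗ₜ[k] (y2 ⊗ₜ[k] y3)) ⊗ₜ[k] (a1 ⊗ₜ[k] (a2 ⊗ₜ[k] a3))) =
      ((y1 ⊗ₜ[k] a1) ⊗ₜ[k] (y2 ⊗ₜ[k] a2)) ⊗ₜ[k] (y3 ⊗ₜ[k] a3) := by
  simp [interC, TensorProduct.tensorTensorTensorComm_tmul]

def interC' : ((Y ⊗[k] Y) ⊗[k] Y) ⊗[k] ((A ⊗[k] A) ⊗[k] A) →ₗ[k]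
    ((Y ⊗[k] A) ⊗[k] (Y ⊗[k] A)) ⊗[k] (Y ⊗[k] A) :=
  interC k ∘ₗ TensorProduct.map (TensorProduct.assoc k Y Y Y).toLinearMap
    (TensorProduct.assoc k A A A).toLinearMap

@[simp] lemma interC'_tmul (y1 y2 y3 : Y) (a1 a2 a3 : A) :
    interC' k (((y1 ⊗ₜ[k] y2) ⊗ₜ[k] y3) ⊗ₜ[k] ((a1 ⊗ₜ[k] a2) ⊗ₜ[k] a3)) =
      ((y1 ⊗ₜ[k] a1) ⊗ₜ[k] (y2 ⊗ₜ[k] a2)) ⊗ₜ[k] (y3 ⊗ₜ[k] a3) := by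
  simp [interC']


lemma rcomul_repr {M : Type*} [AddCommGroup M] [Module k M] [Coalgebra k M]
    (y : M) {ι ι' : Type*} (ry : Coalgebra.Repr k y ι) (ryl : ∀ i : ι, Coalgebra.Repr k (ry.left i) ι') :
    rTensor M (Coalgebra.comul (R := k)) (Coalgebra.comul (R := k) y) =
      ∑ i ∈ ry.index, ∑ i' ∈ (ryl i).index,
        ((ryl i).left i' ⊗ₜ[k] (ryl i).right i') ⊗ₜ[k] ry.right i := by
  rw [show Coalgebra.comul (R := k) y = _ from (ry.eq).symm, map_sum]
  refine Finset.sum_congr rfl fun i _ => ?_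
  rw [rTensor_tmul, show Coalgebra.comul (R := k) (ry.left i) = _ from ((ryl i).eq).symm,
    TensorProduct.sum_tmul]

lemma lcomul_repr {M : Type*} [AddCommGroup M] [Module k M] [Coalgebra k M]
    (y : M) {ι ι' : Type*} (ry : Coalgebra.Repr k y ι) (ryr : ∀ i : ι, Coalgebra.Repr k (ry.right i) ι') :
    lTensor M (Coalgebra.comul (R := k)) (Coalgebra.comul (R := k) y) =
      ∑ i ∈ ry.index, ∑ i' ∈ (ryr i).index,
        ry.left i ⊗ₜ[k] ((ryr i).left i' ⊗ₜ[k] (ryr i).right i') := by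
  rw [show Coalgebra.comul (R := k) y = _ from (ry.eq).symm, map_sum]
  refine Finset.sum_congr rfl fun i _ => ?_
  rw [lTensor_tmul, show Coalgebra.comul (R := k) (ry.right i) = _ from ((ryr i).eq).symm,
    TensorProduct.tmul_sum]


lemma claimL (h : A) :
    rTensor (Y ⊗[k] A) (smashComul k h) ∘ₗ smashComul k h =
      interC' k ∘ₗ TensorProduct.map
        (rTensor Y (Coalgebra.comul (R := k)) ∘ₗ Coalgebra.comul (R := k))
        (rTensor A (LinearMap.mulLeft k ((h ⊗ₜ[k] (1 : A)) * Coalgebra.comul (R := k) h)) ∘ₗ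
          rTensor A (Coalgebra.comul (R := k)) ∘ₗ Coalgebra.comul (R := k)) := by
  apply TensorProduct.ext'
  intro y a
  set ry := Coalgebra.Repr.arbitrary k y with hry
  set ra := Coalgebra.Repr.arbitrary k a with hra
  set rh := Coalgebra.Repr.arbitrary k h with hrh
  have e1 : ∀ (i : Y × Y) (j : A × A),
      smashComul k h (ry.left i ⊗ₜ[k] (h * ra.left j)) =
      ∑ i' ∈ (Coalgebra.Repr.arbitrary k (ry.left i)).index, ∑ p ∈ rh.index,
        ∑ q ∈ (Coalgebra.Repr.arbitrary k (ra.left j)).index,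
        ((Coalgebra.Repr.arbitrary k (ry.left i)).left i' ⊗ₜ[k]
            (h * (rh.left p * (Coalgebra.Repr.arbitrary k (ra.left j)).left q))) ⊗ₜ[k]
          ((Coalgebra.Repr.arbitrary k (ry.left i)).right i' ⊗ₜ[k]
            (rh.right p * (Coalgebra.Repr.arbitrary k (ra.left j)).right q)) := by
    intro i j
    rw [smash_apply k h _ _ (Coalgebra.Repr.arbitrary k (ry.left i))
      (mulRepr k rh (Coalgebra.Repr.arbitrary k (ra.left j)))]
    refine Finset.sum_congr rfl fun i' _ => ?_
    simp only [mulRepr]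
    rw [Finset.sum_product]
  have e2 : ∀ (j : A × A) (q : A × A),
      rTensor A (LinearMap.mulLeft k ((h ⊗ₜ[k] (1 : A)) * Coalgebra.comul (R := k) h))
        (((Coalgebra.Repr.arbitrary k (ra.left j)).left q ⊗ₜ[k]
          (Coalgebra.Repr.arbitrary k (ra.left j)).right q) ⊗ₜ[k] ra.right j) =
      ∑ p ∈ rh.index,
        ((h * (rh.left p * (Coalgebra.Repr.arbitrary k (ra.left j)).left q)) ⊗ₜ[k]
          (rh.right p * (Coalgebra.Repr.arbitrary k (ra.left j)).right q)) ⊗ₜ[k]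
          ra.right j := by
    intro j q
    rw [rTensor_tmul, mulLeft_apply, show Coalgebra.comul (R := k) h = _ from (rh.eq).symm,
      Finset.mul_sum, Finset.sum_mul, TensorProduct.sum_tmul]
    refine Finset.sum_congr rfl fun p _ => ?_
    simp [Algebra.TensorProduct.tmul_mul_tmul, mul_assoc]
  calc (rTensor (Y ⊗[k] A) (smashComul k h) ∘ₗ smashComul k h) (y ⊗ₜ[k] a)
      = ∑ i ∈ ry.index, ∑ j ∈ ra.index,
          ∑ i' ∈ (Coalgebra.Repr.arbitrary k (ry.left i)).index, ∑ p ∈ rh.index,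
          ∑ q ∈ (Coalgebra.Repr.arbitrary k (ra.left j)).index,
          (((Coalgebra.Repr.arbitrary k (ry.left i)).left i' ⊗ₜ[k]
              (h * (rh.left p * (Coalgebra.Repr.arbitrary k (ra.left j)).left q))) ⊗ₜ[k]
            ((Coalgebra.Repr.arbitrary k (ry.left i)).right i' ⊗ₜ[k]
              (rh.right p * (Coalgebra.Repr.arbitrary k (ra.left j)).right q))) ⊗ₜ[k]
            (ry.right i ⊗ₜ[k] ra.right j) := by
        rw [comp_apply, smash_apply k h y a ry ra, map_sum]
        refine Finset.sum_congr rfl fun i _ => ?_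
        rw [map_sum]
        refine Finset.sum_congr rfl fun j _ => ?_
        rw [rTensor_tmul, e1 i j]
        simp only [TensorProduct.sum_tmul]
    _ = (interC' k ∘ₗ TensorProduct.map
        (rTensor Y (Coalgebra.comul (R := k)) ∘ₗ Coalgebra.comul (R := k))
        (rTensor A (LinearMap.mulLeft k ((h ⊗ₜ[k] (1 : A)) * Coalgebra.comul (R := k) h)) ∘ₗ
          rTensor A (Coalgebra.comul (R := k)) ∘ₗ Coalgebra.comul (R := k))) (y ⊗ₜ[k] a) := by
        rw [comp_apply, TensorProduct.map_tmul, comp_apply, comp_apply, comp_apply,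
          rcomul_repr k y ry (fun i => Coalgebra.Repr.arbitrary k (ry.left i)),
          rcomul_repr k a ra (fun j => Coalgebra.Repr.arbitrary k (ra.left j)),
          map_sum]
        simp only [map_sum, e2]
        simp only [TensorProduct.sum_tmul, map_sum]
        simp only [TensorProduct.tmul_sum, map_sum, interC'_tmul]
        refine Finset.sum_congr rfl fun i _ => ?_
        rw [Finset.sum_comm]
        refine Finset.sum_congr rfl fun i' _ => Finset.sum_congr rfl fun j _ => ?_
        rw [Finset.sum_comm]

lemma claimR (h : A) :
    (TensorProduct.assoc k (Y ⊗[k] A) (Y ⊗[k] A) (Y ⊗[k] A)).symm.toLinearMap ∘ₗ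
        lTensor (Y ⊗[k] A) (smashComul k h) ∘ₗ smashComul k h =
      interC k ∘ₗ TensorProduct.map
        (lTensor Y (Coalgebra.comul (R := k)) ∘ₗ Coalgebra.comul (R := k))
        (TensorProduct.map (LinearMap.mulLeft k h) (rTensor A (LinearMap.mulLeft k h)) ∘ₗ
          lTensor A (Coalgebra.comul (R := k)) ∘ₗ Coalgebra.comul (R := k)) := by
  apply TensorProduct.ext'
  intro y a
  set ry := Coalgebra.Repr.arbitrary k y with hry
  set ra := Coalgebra.Repr.arbitrary k a with hra
  calc ((TensorProduct.assoc k (Y ⊗[k] A) (Y ⊗[k] A) (Y ⊗[k] A)).symm.toLinearMap ∘ₗ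
        lTensor (Y ⊗[k] A) (smashComul k h) ∘ₗ smashComul k h) (y ⊗ₜ[k] a)
      = ∑ i ∈ ry.index, ∑ j ∈ ra.index,
          ∑ i' ∈ (Coalgebra.Repr.arbitrary k (ry.right i)).index,
          ∑ q ∈ (Coalgebra.Repr.arbitrary k (ra.right j)).index,
          (((ry.left i ⊗ₜ[k] (h * ra.left j)) ⊗ₜ[k]
            ((Coalgebra.Repr.arbitrary k (ry.right i)).left i' ⊗ₜ[k]
              (h * (Coalgebra.Repr.arbitrary k (ra.right j)).left q)))) ⊗ₜ[k]
            ((Coalgebra.Repr.arbitrary k (ry.right i)).right i' ⊗ₜ[k]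
              (Coalgebra.Repr.arbitrary k (ra.right j)).right q) := by
        rw [comp_apply, comp_apply, smash_apply k h y a ry ra, map_sum, map_sum]
        refine Finset.sum_congr rfl fun i _ => ?_
        rw [map_sum, map_sum]
        refine Finset.sum_congr rfl fun j _ => ?_
        rw [lTensor_tmul, smash_apply k h _ _ (Coalgebra.Repr.arbitrary k (ry.right i))
          (Coalgebra.Repr.arbitrary k (ra.right j))]
        simp only [TensorProduct.tmul_sum, map_sum, LinearEquiv.coe_coe,
          TensorProduct.assoc_symm_tmul]
    _ = (interC k ∘ₗ TensorProduct.map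
        (lTensor Y (Coalgebra.comul (R := k)) ∘ₗ Coalgebra.comul (R := k))
        (TensorProduct.map (LinearMap.mulLeft k h) (rTensor A (LinearMap.mulLeft k h)) ∘ₗ
          lTensor A (Coalgebra.comul (R := k)) ∘ₗ Coalgebra.comul (R := k))) (y ⊗ₜ[k] a) := by
        rw [comp_apply, TensorProduct.map_tmul, comp_apply, comp_apply, comp_apply,
          lcomul_repr k y ry (fun i => Coalgebra.Repr.arbitrary k (ry.right i)),
          lcomul_repr k a ra (fun j => Coalgebra.Repr.arbitrary k (ra.right j)),
          map_sum]
        simp only [map_sum, TensorProduct.map_tmul, rTensor_tmul, mulLeft_apply]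
        simp only [TensorProduct.sum_tmul, map_sum]
        simp only [TensorProduct.tmul_sum, map_sum, interC_tmul]
        refine Finset.sum_congr rfl fun i _ => ?_
        rw [Finset.sum_comm]

lemma mulLeft_tmul (h h' : A) :
    LinearMap.mulLeft k (h ⊗ₜ[k] h' : A ⊗[k] A) =
      TensorProduct.map (LinearMap.mulLeft k h) (LinearMap.mulLeft k h') := by
  apply TensorProduct.ext'
  intro x y
  simp [Algebra.TensorProduct.tmul_mul_tmul]

lemma assoc_nat (f g : A →ₗ[k] A) :
    (TensorProduct.assoc k A A A).toLinearMap ∘ₗ rTensor A (TensorProduct.map f g) =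
      TensorProduct.map f (rTensor A g) ∘ₗ (TensorProduct.assoc k A A A).toLinearMap := by
  apply TensorProduct.ext_threefold
  intro x y z
  simp

/-- If `ε(h) = 1` and `(h ⊗ 1) Δ_A(h) = h ⊗ h`, then the partial smash
coproduct comultiplication `Δ̄(y ⊗ a) = (y₍₁₎ ⊗ h a₍₁₎) ⊗ (y₍₂₎ ⊗ a₍₂₎)` is
coassociative. -/
theorem stmt_13 {k Y A : Type*} [CommRing k]
    [AddCommGroup Y] [Module k Y] [Coalgebra k Y] [Ring A] [Bialgebra k A]
    (h : A) (h1 : Coalgebra.counit (R := k) h = 1)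
    (h2 : (h ⊗ₜ[k] (1 : A)) * Coalgebra.comul (R := k) h = h ⊗ₜ[k] h) :
    rTensor (Y ⊗[k] A) (smashComul k h) ∘ₗ smashComul k h =
      (TensorProduct.assoc k (Y ⊗[k] A) (Y ⊗[k] A) (Y ⊗[k] A)).symm.toLinearMap ∘ₗ
        lTensor (Y ⊗[k] A) (smashComul k h) ∘ₗ smashComul k h := by
  rw [claimL k h, claimR k h, h2, mulLeft_tmul k h h]
  unfold interC'
  rw [comp_assoc, ← TensorProduct.map_comp]
  congr 1
  congr 1
  · exact Coalgebra.coassoc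
  · rw [← comp_assoc, ← comp_assoc, assoc_nat, comp_assoc, comp_assoc, Coalgebra.coassoc]
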